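/- (Strong ordering / strong comparison principle) Let S be a local energy of range r with the strong twist condition: ∂_i∂_j S_i(x) ≤ -λ < 0 for all j in {i+1,...,i+r}, and ∂_j∂_k S_i ≡ 0 whenever j ≠ i, k ≠ i, j ≠ k. Let B = [i0-r, i1] be a segment of Z with interior B̊ = [i0, i1], and let x, y be sequences solving the recurrence Σ_{j=i-r}^{i} ∂_i S_j(z) = 0 for all i in B̊. If x_i ≤ y_i for all i in the closure [i0-r, i1+r] and x ≠ y on that closure, then x_i < y_i strictly for all i in B̊. -/

import Mathlib

open Finset Filter Topology

noncomputable def d1 (f : ℝ → ℝ → ℝ) (ν μ : ℝ) : ℝ := deriv (fun t => f t μ) ν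
noncomputable def d2 (f : ℝ → ℝ → ℝ) (ν μ : ℝ) : ℝ := deriv (fun t => f ν t) μ
noncomputable def d11 (f : ℝ → ℝ → ℝ) (ν μ : ℝ) : ℝ := deriv (fun t => d1 f t μ) ν
noncomputable def d12 (f : ℝ → ℝ → ℝ) (ν μ : ℝ) : ℝ := deriv (fun t => d2 f t μ) ν
noncomputable def d22 (f : ℝ → ℝ → ℝ) (ν μ : ℝ) : ℝ := deriv (fun t => d2 f ν t) μ

/-- The local energy at site `i` of the sequence `z`:  `S_i(z) = ∑_{j=1}^r f_j(z_i, z_{i+j})`. -/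
noncomputable def siteE (r : ℕ) (f : ℕ → ℝ → ℝ → ℝ) (z : ℤ → ℝ) (i : ℤ) : ℝ :=
  ∑ j ∈ Finset.Icc 1 r, f j (z i) (z (i + j))

/-- `W_B` for the segment `B = [a,b] ⊂ ℤ`. -/
noncomputable def Wseg (r : ℕ) (f : ℕ → ℝ → ℝ → ℝ) (a b : ℤ) (z : ℤ → ℝ) : ℝ :=
  ∑ i ∈ Finset.Icc a b, siteE r f z i

/-- A global minimizer: for every segment with interior `[a,b]` and every variation `v`
supported in `[a,b]`, the energy does not decrease. -/
def IsGlobalMin (r : ℕ) (f : ℕ → ℝ → ℝ → ℝ) (x : ℤ → ℝ) : Prop :=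
  ∀ a b : ℤ, ∀ v : ℤ → ℝ, (∀ i, v i ≠ 0 → i ∈ Finset.Icc a b) →
    Wseg r f (a - r) b x ≤ Wseg r f (a - r) b (x + v)

/-- The variational monotone recurrence relation `∑_{j=i-r}^{i} ∂_i S_j(x) = 0` at site `i`. -/
def SolvesEL (r : ℕ) (f : ℕ → ℝ → ℝ → ℝ) (x : ℤ → ℝ) (i : ℤ) : Prop :=
  (∑ j ∈ Finset.Icc 1 r, (d1 (f j) (x i) (x (i + j)) + d2 (f j) (x (i - j)) (x i))) = 0

/-- A local energy of range `r` in the sense of Definition 1.5 of the paper. -/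
structure LocalEnergy (r : ℕ) (K lam : ℝ) where
  f : ℕ → ℝ → ℝ → ℝ
  smooth : ∀ j, ContDiff ℝ 2 (fun p : ℝ × ℝ => f j p.1 p.2)
  periodic : ∀ j ν μ, f j (ν + 1) (μ + 1) = f j ν μ
  bound11 : ∀ j ν μ, |d11 (f j) ν μ| ≤ K / r
  bound12 : ∀ j ν μ, |d12 (f j) ν μ| ≤ K / r
  bound22 : ∀ j ν μ, |d22 (f j) ν μ| ≤ K / r
  coercive : ∀ j ∈ Finset.Icc 1 r, ∀ C : ℝ, ∃ R : ℝ, ∀ ν μ : ℝ, R ≤ |ν - μ| → C ≤ f j ν μ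
  twist : ∀ j ∈ Finset.Icc 1 r, ∀ ν μ : ℝ, d12 (f j) ν μ ≤ -lam

/-- `x` and `y` are weakly ordered on the set `s`. -/
def WOrd (x y : ℤ → ℝ) (s : Set ℤ) : Prop :=
  (∀ i ∈ s, x i ≤ y i) ∨ (∀ i ∈ s, y i ≤ x i)

/-- `D` is an interval outside of which (on both components of the complement)
`x` and `y` are weakly ordered. -/
def CrossProp (x y : ℤ → ℝ) (D : Set ℤ) : Prop :=
  D.OrdConnected ∧ WOrd x y {i | ∀ j ∈ D, i < j} ∧ WOrd x y {i | ∀ j ∈ D, j < i}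

/-- The domain of crossing of `x` and `y`: the minimal interval `D` such that `x` and `y`
are weakly ordered on the connected components of its complement. -/
def IsCrossingDomain (x y : ℤ → ℝ) (D : Set ℤ) : Prop :=
  CrossProp x y D ∧ ∀ D' : Set ℤ, CrossProp x y D' → D ⊆ D'

/-- The translation `(τ_{k,l} x)_i = x_{i-k} + l`. -/
def transl (k l : ℤ) (x : ℤ → ℝ) : ℤ → ℝ := fun i => x (i - k) + l

/-- The Birkhoff property. -/
def Birkhoff (x : ℤ → ℝ) : Prop :=
  ∀ k l : ℤ, (∀ i, transl k l x i ≤ x i) ∨ (∀ i, x i ≤ transl k l x i)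

section key
variable (g : ℝ → ℝ → ℝ) (hg : ContDiff ℝ 2 (fun p : ℝ × ℝ => g p.1 p.2))

lemma quant (φ φ' : ℝ → ℝ) (hφ : ∀ t, HasDerivAt φ (φ' t) t) (lam : ℝ)
    (h : ∀ t, φ' t ≤ -lam) {a b : ℝ} (hab : a ≤ b) : lam * (b - a) ≤ φ a - φ b := by
  set ψ : ℝ → ℝ := fun t => φ t + lam * t with hψ
  have hψd : ∀ t, HasDerivAt ψ (φ' t + lam) t := fun t => by
    exact ((hφ t).add ((hasDerivAt_id t).const_mul lam)).congr_deriv (by simp)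
  have hmono : Antitone ψ := by
    apply antitone_of_deriv_nonpos (fun t => (hψd t).differentiableAt)
    intro t
    rw [(hψd t).deriv]
    linarith [h t]
  have := hmono hab
  simp only [hψ] at this
  nlinarith

include hg

lemma keyd1 (ν μ : ℝ) :
    d1 g ν μ = fderiv ℝ (fun p : ℝ × ℝ => g p.1 p.2) (ν, μ) (1, 0) := by
  have h : HasDerivAt (fun t => g t μ)
      (fderiv ℝ (fun p : ℝ × ℝ => g p.1 p.2) (ν, μ) (1, 0)) ν :=
    by have := ((hg.differentiable (by norm_num) (ν, μ)).hasFDerivAt).comp_hasDerivAt ν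
        ((hasDerivAt_id' ν).prodMk (hasDerivAt_const ν μ))
       exact this
  simp only [d1, d2, d12]
  exact h.deriv

lemma keyd2 (ν μ : ℝ) :
    d2 g ν μ = fderiv ℝ (fun p : ℝ × ℝ => g p.1 p.2) (ν, μ) (0, 1) := by
  have h : HasDerivAt (fun t => g ν t)
      (fderiv ℝ (fun p : ℝ × ℝ => g p.1 p.2) (ν, μ) (0, 1)) μ :=
    ((hg.differentiable (by norm_num) (ν, μ)).hasFDerivAt).comp_hasDerivAt μ
      ((hasDerivAt_const μ ν).prodMk (hasDerivAt_id μ))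
  simp only [d1, d2, d12]
  exact h.deriv

lemma keyH2 (ν μ : ℝ) (v : ℝ × ℝ) :
    HasDerivAt (fun t => fderiv ℝ (fun p : ℝ × ℝ => g p.1 p.2) (t, μ) v)
      (fderiv ℝ (fderiv ℝ (fun p : ℝ × ℝ => g p.1 p.2)) (ν, μ) (1, 0) v) ν := by
  have hG : Differentiable ℝ (fderiv ℝ (fun p : ℝ × ℝ => g p.1 p.2)) :=
    (hg.fderiv_right (m := 1) le_rfl).differentiable one_ne_zero
  have h : HasDerivAt (fun t => fderiv ℝ (fun p : ℝ × ℝ => g p.1 p.2) (t, μ))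
      (fderiv ℝ (fderiv ℝ (fun p : ℝ × ℝ => g p.1 p.2)) (ν, μ) (1, 0)) ν :=
    (hG (ν, μ)).hasFDerivAt.comp_hasDerivAt ν
      ((hasDerivAt_id ν).prodMk (hasDerivAt_const ν μ))
  have := h.clm_apply (hasDerivAt_const ν v)
  simpa using this

lemma keyH2' (ν μ : ℝ) (v : ℝ × ℝ) :
    HasDerivAt (fun t => fderiv ℝ (fun p : ℝ × ℝ => g p.1 p.2) (ν, t) v)
      (fderiv ℝ (fderiv ℝ (fun p : ℝ × ℝ => g p.1 p.2)) (ν, μ) (0, 1) v) μ := by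
  have hG : Differentiable ℝ (fderiv ℝ (fun p : ℝ × ℝ => g p.1 p.2)) :=
    (hg.fderiv_right (m := 1) le_rfl).differentiable one_ne_zero
  have h : HasDerivAt (fun t => fderiv ℝ (fun p : ℝ × ℝ => g p.1 p.2) (ν, t))
      (fderiv ℝ (fderiv ℝ (fun p : ℝ × ℝ => g p.1 p.2)) (ν, μ) (0, 1)) μ :=
    (hG (ν, μ)).hasFDerivAt.comp_hasDerivAt μ
      ((hasDerivAt_const μ ν).prodMk (hasDerivAt_id μ))
  have := h.clm_apply (hasDerivAt_const μ v)
  simpa using this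

lemma keyd12 (ν μ : ℝ) :
    d12 g ν μ = fderiv ℝ (fderiv ℝ (fun p : ℝ × ℝ => g p.1 p.2)) (ν, μ) (1, 0) (0, 1) := by
  have h : HasDerivAt (fun t => d2 g t μ)
      (fderiv ℝ (fderiv ℝ (fun p : ℝ × ℝ => g p.1 p.2)) (ν, μ) (1, 0) (0, 1)) ν := by
    have := keyH2 g hg ν μ (0, 1)
    apply this.congr_of_eventuallyEq
    filter_upwards with t
    exact keyd2 g hg t μ
  simp only [d1, d2, d12]
  exact h.deriv

lemma hasderiv_d2 (ν μ : ℝ) :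
    HasDerivAt (fun t => d2 g t μ) (d12 g ν μ) ν := by
  rw [keyd12 g hg]
  have := keyH2 g hg ν μ ((0 : ℝ), (1 : ℝ))
  apply this.congr_of_eventuallyEq
  filter_upwards with t
  exact keyd2 g hg t μ

lemma hasderiv_d1 (ν μ : ℝ) :
    HasDerivAt (fun t => d1 g ν t) (d12 g ν μ) μ := by
  have hsymm := (hg.contDiffAt (x := (ν, μ))).isSymmSndFDerivAt (by norm_num)
  rw [keyd12 g hg, ← hsymm (0, 1) (1, 0)]
  have := keyH2' g hg ν μ ((1 : ℝ), (0 : ℝ))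
  apply this.congr_of_eventuallyEq
  filter_upwards with t
  exact keyd1 g hg ν t

lemma key1 (lam : ℝ) (ht : ∀ ν μ, d12 g ν μ ≤ -lam) (ν : ℝ) {a b : ℝ} (hab : a ≤ b) :
    lam * (b - a) ≤ d1 g ν a - d1 g ν b :=
  quant _ _ (fun t => hasderiv_d1 g hg ν t) lam (fun t => ht ν t) hab

lemma key2 (lam : ℝ) (ht : ∀ ν μ, d12 g ν μ ≤ -lam) (μ : ℝ) {a b : ℝ} (hab : a ≤ b) :
    lam * (b - a) ≤ d2 g a μ - d2 g b μ :=
  quant _ _ (fun t => hasderiv_d2 g hg t μ) lam (fun t => ht t μ) hab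

end key

/-- Strong ordering (strong comparison) principle:  if `x` and `y` solve the recurrence
relation on the interior `[i0,i1]` of the segment `B = [i0-r,i1]`, `x ≤ y` on the closure
`[i0-r, i1+r]` and `x ≠ y` there, then `x < y` strictly on the interior. -/

theorem stmt4 (r : ℕ) (hr : 1 ≤ r) (lam : ℝ) (hlam : 0 < lam)
    (f : ℕ → ℝ → ℝ → ℝ)
    (hsmooth : ∀ j, ContDiff ℝ 2 (fun p : ℝ × ℝ => f j p.1 p.2))
    (htwist : ∀ j ∈ Finset.Icc 1 r, ∀ ν μ : ℝ, d12 (f j) ν μ ≤ -lam)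
    (i0 i1 : ℤ) (h01 : i0 ≤ i1) (x y : ℤ → ℝ)
    (hELx : ∀ i ∈ Finset.Icc i0 i1, SolvesEL r f x i)
    (hELy : ∀ i ∈ Finset.Icc i0 i1, SolvesEL r f y i)
    (hord : ∀ i ∈ Finset.Icc (i0 - r) (i1 + r), x i ≤ y i)
    (hne : ∃ i ∈ Finset.Icc (i0 - (r:ℤ)) (i1 + r), x i ≠ y i) :
    ∀ i ∈ Finset.Icc i0 i1, x i < y i := by
  have hrz : (0 : ℤ) ≤ r := Int.natCast_nonneg r
  have hd1 : ∀ j ∈ Finset.Icc 1 r, ∀ ν : ℝ, ∀ {a b : ℝ}, a ≤ b →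
      lam * (b - a) ≤ d1 (f j) ν a - d1 (f j) ν b :=
    fun j hj ν _ _ hab => key1 (f j) (hsmooth j) lam (htwist j hj) ν hab
  have hd2 : ∀ j ∈ Finset.Icc 1 r, ∀ μ : ℝ, ∀ {a b : ℝ}, a ≤ b →
      lam * (b - a) ≤ d2 (f j) a μ - d2 (f j) b μ :=
    fun j hj μ _ _ hab => key2 (f j) (hsmooth j) lam (htwist j hj) μ hab
  -- propagation of equality from an interior point to all points at distance ≤ r
  have prop : ∀ i ∈ Finset.Icc i0 i1, x i = y i →
      ∀ j ∈ Finset.Icc 1 r, x (i + j) = y (i + j) ∧ x (i - j) = y (i - j) := by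
    intro i hi hxy
    obtain ⟨hi0, hi1⟩ := Finset.mem_Icc.mp hi
    have hEx := hELx i hi
    have hEy := hELy i hi
    unfold SolvesEL at hEx hEy
    have hmemup : ∀ j ∈ Finset.Icc 1 r, (i + j) ∈ Finset.Icc (i0 - (r:ℤ)) (i1 + r) := by
      intro j hj
      obtain ⟨hj1, hjr⟩ := Finset.mem_Icc.mp hj
      have hj1' : (1:ℤ) ≤ j := by exact_mod_cast hj1
      have hjr' : (j:ℤ) ≤ r := by exact_mod_cast hjr
      rw [Finset.mem_Icc]; omega
    have hmemdn : ∀ j ∈ Finset.Icc 1 r, (i - j) ∈ Finset.Icc (i0 - (r:ℤ)) (i1 + r) := by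
      intro j hj
      obtain ⟨hj1, hjr⟩ := Finset.mem_Icc.mp hj
      have hj1' : (1:ℤ) ≤ j := by exact_mod_cast hj1
      have hjr' : (j:ℤ) ≤ r := by exact_mod_cast hjr
      rw [Finset.mem_Icc]; omega
    have hbd : ∀ j ∈ Finset.Icc 1 r,
        lam * ((y (i+j) - x (i+j)) + (y (i-j) - x (i-j))) ≤
        (d1 (f j) (x i) (x (i+j)) + d2 (f j) (x (i-j)) (x i))
          - (d1 (f j) (y i) (y (i+j)) + d2 (f j) (y (i-j)) (y i)) := by
      intro j hj
      have hup : x (i+j) ≤ y (i+j) := hord _ (hmemup j hj)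
      have hdn : x (i-j) ≤ y (i-j) := hord _ (hmemdn j hj)
      have h1 := hd1 j hj (x i) hup
      have h2 := hd2 j hj (x i) hdn
      rw [← hxy]
      nlinarith
    have hsum0 : ∑ j ∈ Finset.Icc 1 r,
        ((d1 (f j) (x i) (x (i+j)) + d2 (f j) (x (i-j)) (x i))
          - (d1 (f j) (y i) (y (i+j)) + d2 (f j) (y (i-j)) (y i))) = 0 := by
      rw [Finset.sum_sub_distrib, hEx, hEy]; ring
    have hsumle : ∑ j ∈ Finset.Icc 1 r,
        lam * ((y (i+j) - x (i+j)) + (y (i-j) - x (i-j))) ≤ 0 :=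
      le_of_le_of_eq (Finset.sum_le_sum hbd) hsum0
    have hnn : ∀ j ∈ Finset.Icc 1 r,
        0 ≤ lam * ((y (i+j) - x (i+j)) + (y (i-j) - x (i-j))) := by
      intro j hj
      have hup : x (i+j) ≤ y (i+j) := hord _ (hmemup j hj)
      have hdn : x (i-j) ≤ y (i-j) := hord _ (hmemdn j hj)
      nlinarith
    have heach := (Finset.sum_eq_zero_iff_of_nonneg hnn).mp
      (le_antisymm hsumle (Finset.sum_nonneg hnn))
    intro j hj
    have h0 := heach j hj
    have hup : x (i+j) ≤ y (i+j) := hord _ (hmemup j hj)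
    have hdn : x (i-j) ≤ y (i-j) := hord _ (hmemdn j hj)
    have hs : (y (i+j) - x (i+j)) + (y (i-j) - x (i-j)) = 0 := by
      rcases mul_eq_zero.mp h0 with h | h
      · exact absurd h (ne_of_gt hlam)
      · exact h
    constructor <;> linarith
  have eqstep : ∀ i ∈ Finset.Icc i0 i1, x i = y i →
      x (i + 1) = y (i + 1) ∧ x (i - 1) = y (i - 1) := by
    intro i hi h
    have := prop i hi h 1 (Finset.mem_Icc.mpr ⟨le_rfl, hr⟩)
    simpa using this
  -- equality at one interior point spreads to all of [i0, i1]
  have hall : ∀ k ∈ Finset.Icc i0 i1, x k = y k → ∀ m ∈ Finset.Icc i0 i1, x m = y m := by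
    intro k hk hkeq
    obtain ⟨hk0, hk1⟩ := Finset.mem_Icc.mp hk
    have down : ∀ n : ℕ, i0 ≤ k - n → x (k - n) = y (k - n) := by
      intro n
      induction n with
      | zero => intro _; simpa using hkeq
      | succ n ih =>
        intro h
        have hn1 : ((n+1 : ℕ) : ℤ) = (n : ℤ) + 1 := by push_cast; ring
        rw [hn1] at h ⊢
        have hnn : (0:ℤ) ≤ (n:ℤ) := Int.natCast_nonneg n
        have h1 : i0 ≤ k - n := by omega
        have hmem : k - (n:ℤ) ∈ Finset.Icc i0 i1 := Finset.mem_Icc.mpr ⟨h1, by omega⟩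
        have := (eqstep _ hmem (ih h1)).2
        have he : k - ((n:ℤ) + 1) = (k - n) - 1 := by ring
        rw [he]
        exact this
    have hi0eq : x i0 = y i0 := by
      have hd := down (k - i0).toNat (by
        rw [Int.toNat_of_nonneg (by omega)]; omega)
      rwa [Int.toNat_of_nonneg (by omega), show k - (k - i0) = i0 by ring] at hd
    have up : ∀ n : ℕ, i0 + n ≤ i1 → x (i0 + n) = y (i0 + n) := by
      intro n
      induction n with
      | zero => intro _; simpa using hi0eq
      | succ n ih =>
        intro h
        have hn1 : ((n+1 : ℕ) : ℤ) = (n : ℤ) + 1 := by push_cast; ring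
        rw [hn1] at h ⊢
        have hnn : (0:ℤ) ≤ (n:ℤ) := Int.natCast_nonneg n
        have h1 : i0 + n ≤ i1 := by omega
        have hmem : i0 + (n:ℤ) ∈ Finset.Icc i0 i1 := Finset.mem_Icc.mpr ⟨by omega, h1⟩
        have := (eqstep _ hmem (ih h1)).1
        have he : i0 + ((n:ℤ) + 1) = (i0 + n) + 1 := by ring
        rw [he]
        exact this
    intro m hm
    obtain ⟨hm0, hm1⟩ := Finset.mem_Icc.mp hm
    have hu := up (m - i0).toNat (by rw [Int.toNat_of_nonneg (by omega)]; omega)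
    rwa [Int.toNat_of_nonneg (by omega), show i0 + (m - i0) = m by ring] at hu
  -- final argument
  intro i hi
  obtain ⟨hi0, hi1⟩ := Finset.mem_Icc.mp hi
  rcases lt_or_eq_of_le (hord i (Finset.mem_Icc.mpr ⟨by omega, by omega⟩)) with h | heq
  · exact h
  · exfalso
    have halleq : ∀ m ∈ Finset.Icc i0 i1, x m = y m := hall i hi heq
    obtain ⟨w, hw, hwne⟩ := hne
    obtain ⟨hw0, hw1⟩ := Finset.mem_Icc.mp hw
    apply hwne
    by_cases hlo : w < i0
    · set j := (i0 - w).toNat with hj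
      have hjz : (j:ℤ) = i0 - w := Int.toNat_of_nonneg (by omega)
      have hjmem : j ∈ Finset.Icc 1 r := by
        rw [Finset.mem_Icc]
        constructor
        · omega
        · have : (j:ℤ) ≤ r := by omega
          exact_mod_cast this
      have := (prop i0 (Finset.mem_Icc.mpr ⟨le_rfl, h01⟩)
        (halleq i0 (Finset.mem_Icc.mpr ⟨le_rfl, h01⟩)) j hjmem).2
      rwa [hjz, show i0 - (i0 - w) = w by ring] at this
    · by_cases hhi : i1 < w
      · set j := (w - i1).toNat with hj
        have hjz : (j:ℤ) = w - i1 := Int.toNat_of_nonneg (by omega)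
        have hjmem : j ∈ Finset.Icc 1 r := by
          rw [Finset.mem_Icc]
          constructor
          · omega
          · have : (j:ℤ) ≤ r := by omega
            exact_mod_cast this
        have := (prop i1 (Finset.mem_Icc.mpr ⟨h01, le_rfl⟩)
          (halleq i1 (Finset.mem_Icc.mpr ⟨h01, le_rfl⟩)) j hjmem).1
        rwa [hjz, show i1 + (w - i1) = w by ring] at this
      · exact halleq w (Finset.mem_Icc.mpr ⟨by omega, by omega⟩)
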